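/- Let Q : U → ℝ^K be continuous on an open convex set U and satisfy the law of demand, and let H ⊆ U be open. If the restriction of Q to H is not constant on any nondegenerate line segment contained in H, then Q is injective on H. -/

import Mathlib

open scoped RealInnerProductSpace
open Filter

theorem key {K : ℕ} (U : Set (EuclideanSpace ℝ (Fin K)))
    (hUopen : IsOpen U) (hUconv : Convex ℝ U)
    (Q : EuclideanSpace ℝ (Fin K) → EuclideanSpace ℝ (Fin K))
    (hQcont : ContinuousOn Q U)
    (hLoD : ∀ u ∈ U, ∀ w ∈ U, (0:ℝ) ≤ ⟪Q u - Q w, u - w⟫)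
    {u w : EuclideanSpace ℝ (Fin K)} (hu : u ∈ U) (hw : w ∈ U)
    (hQ : Q u = Q w) {t : ℝ} (ht : t ∈ Set.Ioo (0:ℝ) 1) :
    Q (u + t • (w - u)) = Q u := by
  set x := u + t • (w - u) with hx
  have hxU : x ∈ U := by
    have h := hUconv hu hw (by linarith [ht.2] : (0:ℝ) ≤ 1 - t) (le_of_lt ht.1) (by ring)
    convert h using 1
    module
  set v := Q x - Q u with hv
  obtain ⟨r, hr, hball⟩ := Metric.isOpen_iff.mp hUopen x hxU
  set δ := r / (‖v‖ + 1) with hδ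
  have hδpos : 0 < δ := div_pos hr (by positivity)
  have hzU : ∀ ε ∈ Set.Ioo (0:ℝ) δ, x - ε • v ∈ U := by
    intro ε hε
    apply hball
    rw [Metric.mem_ball, dist_eq_norm]
    have e : x - ε • v - x = -(ε • v) := by module
    rw [e, norm_neg, norm_smul, Real.norm_eq_abs, abs_of_pos hε.1]
    have h1 : ε * ‖v‖ ≤ ε * (‖v‖ + 1) := by nlinarith [hε.1.le]
    have h2 : ε * (‖v‖ + 1) < δ * (‖v‖ + 1) := by nlinarith [hε.2, norm_nonneg v]
    have h3 : δ * (‖v‖ + 1) = r := by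
      rw [hδ, div_mul_cancel₀]; positivity
    linarith
  have hineq : ∀ ε ∈ Set.Ioo (0:ℝ) δ, ⟪Q (x - ε • v) - Q u, v⟫ ≤ 0 := by
    intro ε hε
    have h1 := hLoD _ (hzU ε hε) u hu
    have h2 := hLoD _ (hzU ε hε) w hw
    rw [← hQ] at h2
    have e1 : x - ε • v - u = t • (w - u) - ε • v := by module
    have e2 : x - ε • v - w = (t - 1) • (w - u) - ε • v := by module
    rw [e1, inner_sub_right, real_inner_smul_right, real_inner_smul_right] at h1
    rw [e2, inner_sub_right, real_inner_smul_right, real_inner_smul_right] at h2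
    nlinarith [ht.1, ht.2, hε.1]
  have hmem : Set.Ioo (0:ℝ) δ ∈ nhdsWithin (0:ℝ) (Set.Ioi 0) := by
    rw [← Set.Ioi_inter_Iio]
    exact inter_mem_nhdsWithin _ (Iio_mem_nhds hδpos)
  have hlimz : Tendsto (fun ε : ℝ => x - ε • v) (nhdsWithin 0 (Set.Ioi 0)) (nhds x) := by
    have hc : Continuous fun ε : ℝ => x - ε • v :=
      continuous_const.sub (continuous_id.smul continuous_const)
    have h0 := hc.tendsto 0
    simp only [zero_smul, sub_zero] at h0
    exact h0.mono_left nhdsWithin_le_nhds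
  have hQlim : Tendsto (fun ε : ℝ => Q (x - ε • v)) (nhdsWithin 0 (Set.Ioi 0)) (nhds (Q x)) := by
    refine (hQcont x hxU).tendsto.comp ?_
    rw [tendsto_nhdsWithin_iff]
    exact ⟨hlimz, Filter.eventually_of_mem hmem fun ε hε => hzU ε hε⟩
  have hlim : Tendsto (fun ε : ℝ => (⟪Q (x - ε • v) - Q u, v⟫ : ℝ))
      (nhdsWithin 0 (Set.Ioi 0)) (nhds (⟪Q x - Q u, v⟫ : ℝ)) :=
    (hQlim.sub tendsto_const_nhds).inner tendsto_const_nhds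
  have hle : (⟪Q x - Q u, v⟫ : ℝ) ≤ 0 :=
    le_of_tendsto hlim (Filter.eventually_of_mem hmem hineq)
  rw [← hv] at hle
  have hv0 : v = 0 := by
    rw [← real_inner_self_nonpos]
    exact hle
  exact sub_eq_zero.mp hv0

theorem stmt_4 {K : ℕ} (U H : Set (EuclideanSpace ℝ (Fin K)))
    (hUopen : IsOpen U) (hUconv : Convex ℝ U)
    (Q : EuclideanSpace ℝ (Fin K) → EuclideanSpace ℝ (Fin K))
    (hQcont : ContinuousOn Q U)
    (hLoD : ∀ u ∈ U, ∀ w ∈ U, (0:ℝ) ≤ ⟪Q u - Q w, u - w⟫)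
    (hHU : H ⊆ U) (hHopen : IsOpen H)
    (hseg : ∀ u ∈ H, ∀ w ∈ H, u ≠ w → segment ℝ u w ⊆ H →
      ¬ (∀ x ∈ segment ℝ u w, Q x = Q u)) :
    Set.InjOn Q H := by
  intro a ha b hb hQab
  by_contra hne
  have hd : b - a ≠ 0 := sub_ne_zero.mpr (Ne.symm hne)
  have hdn : (0:ℝ) < ‖b - a‖ := norm_pos_iff.mpr hd
  obtain ⟨r, hr, hball⟩ := Metric.isOpen_iff.mp hHopen a ha
  set c := min (r / (2 * ‖b - a‖)) (1/2) with hc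
  have hcpos : 0 < c := lt_min (by positivity) (by norm_num)
  have hclt : c < 1 := lt_of_le_of_lt (min_le_right _ _) (by norm_num)
  have hcr : c * ‖b - a‖ < r := by
    have h1 : c ≤ r / (2 * ‖b - a‖) := min_le_left _ _
    have h2 : c * ‖b - a‖ ≤ r / 2 := by
      calc c * ‖b - a‖ ≤ (r / (2 * ‖b - a‖)) * ‖b - a‖ :=
            mul_le_mul_of_nonneg_right h1 hdn.le
        _ = r / 2 := by field_simp
    linarith
  set w' := a + c • (b - a) with hw'
  have hsegmem : ∀ y ∈ segment ℝ a w', y ∈ Metric.ball a r := by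
    intro y hy
    rw [segment_eq_image'] at hy
    obtain ⟨θ, hθ, rfl⟩ := hy
    rw [Metric.mem_ball, dist_eq_norm]
    have e : a + θ • (w' - a) - a = (θ * c) • (b - a) := by
      rw [hw']; module
    rw [e, norm_smul, Real.norm_eq_abs, abs_of_nonneg (by nlinarith [hθ.1, hcpos.le])]
    calc θ * c * ‖b - a‖ ≤ 1 * c * ‖b - a‖ := by
          nlinarith [mul_nonneg (mul_nonneg (sub_nonneg.mpr hθ.2) hcpos.le) hdn.le]
      _ = c * ‖b - a‖ := by ring
      _ < r := hcr
  have hsegH : segment ℝ a w' ⊆ H := fun y hy => hball (hsegmem y hy)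
  have hw'H : w' ∈ H := hsegH (right_mem_segment ℝ a w')
  have hne' : a ≠ w' := by
    intro h
    apply hd
    have : c • (b - a) = 0 := by
      have := h.symm
      rw [hw'] at this
      simpa using this
    rcases smul_eq_zero.mp this with h' | h'
    · exact absurd h' (ne_of_gt hcpos)
    · exact h'
  apply hseg a ha w' hw'H hne' hsegH
  intro y hy
  rw [segment_eq_image'] at hy
  obtain ⟨θ, hθ, rfl⟩ := hy
  show Q (a + θ • (w' - a)) = Q a
  have e : a + θ • (w' - a) = a + (θ * c) • (b - a) := by rw [hw']; module
  rw [e]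
  rcases eq_or_lt_of_le hθ.1 with h0 | h0
  · rw [← h0]; simp
  · have ht : θ * c ∈ Set.Ioo (0:ℝ) 1 := by
      constructor
      · positivity
      · nlinarith [hθ.2, hcpos]
    exact key U hUopen hUconv Q hQcont hLoD (hHU ha) (hHU hb) hQab ht
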